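/- Fix d ∈ {3,4}, set ℓ = d/(d-2), and let c > 0. Let Q : [0,∞) → (0, 1/d] be the unique function satisfying c·ξ^{2ℓ} = (1 − d·Q(ξ))/Q(ξ)^ℓ for all ξ ≥ 0. Then there exist constants C > 0 and ξ₀ > 0 such that |Q(ξ) − c^{-1/ℓ}·ξ^{-2}| ≤ C·ξ^{-4} for all ξ ≥ ξ₀; in particular ξ²·Q(ξ) → c^{-1/ℓ} as ξ → ∞. -/

import Mathlib

open Filter Set

/-- Asymptotics of the profile at infinity: `Q(ξ) = c^{-1/ℓ} ξ^{-2} + O(ξ^{-4})` as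
`ξ → ∞`; in particular `ξ² Q(ξ) → c^{-1/ℓ}`. -/
theorem profile_Q_asymptotics_at_infinity
    (d : ℕ) (hd : d = 3 ∨ d = 4)
    (ℓ : ℕ) (hℓ : ℓ = d / (d - 2))
    (c : ℝ) (hc : 0 < c)
    (Q : ℝ → ℝ)
    (hQ : ∀ ξ : ℝ, 0 ≤ ξ → Q ξ ∈ Set.Ioc 0 (1 / (d : ℝ)) ∧
      c * ξ ^ (2 * ℓ) = (1 - (d : ℝ) * Q ξ) / Q ξ ^ ℓ) :
    (∃ C : ℝ, 0 < C ∧ ∃ ξ₀ : ℝ, 0 < ξ₀ ∧ ∀ ξ : ℝ, ξ₀ ≤ ξ →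
      |Q ξ - c ^ (-(1 : ℝ) / (ℓ : ℝ)) / ξ ^ 2| ≤ C / ξ ^ 4) ∧
    Tendsto (fun ξ : ℝ => ξ ^ 2 * Q ξ) atTop (nhds (c ^ (-(1 : ℝ) / (ℓ : ℝ)))) := by
  have hℓ1 : 1 ≤ ℓ := by rcases hd with h | h <;> subst h <;> omega
  have hd3 : 3 ≤ d := by omega
  have hdpos : (0 : ℝ) < d := by positivity
  set b : ℝ := c ^ ((1 : ℝ) / (ℓ : ℝ)) with hb
  have hbpos : 0 < b := Real.rpow_pos_of_pos hc _
  have hℓne : (ℓ : ℝ) ≠ 0 := by exact_mod_cast (by omega : ℓ ≠ 0)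
  have hbl : b ^ ℓ = c := by
    rw [hb, ← Real.rpow_natCast (c ^ ((1 : ℝ) / (ℓ : ℝ))) ℓ, ← Real.rpow_mul hc.le,
      one_div, inv_mul_cancel₀ hℓne, Real.rpow_one]
  have ha : c ^ (-(1 : ℝ) / (ℓ : ℝ)) = b⁻¹ := by
    rw [neg_div, Real.rpow_neg hc.le, hb]
  set C : ℝ := d * b⁻¹ ^ 2 with hC
  have hCpos : 0 < C := by positivity
  have key : ∀ ξ : ℝ, 1 ≤ ξ → |Q ξ - b⁻¹ / ξ ^ 2| ≤ C / ξ ^ 4 := by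
    intro ξ hξ
    have hξ0 : (0 : ℝ) < ξ := lt_of_lt_of_le one_pos hξ
    obtain ⟨⟨hq0, hq1d⟩, heq⟩ := hQ ξ (le_of_lt hξ0)
    set q := Q ξ with hq
    have hqlne : q ^ ℓ ≠ 0 := pow_ne_zero _ (ne_of_gt hq0)
    have heq2 : c * ξ ^ (2 * ℓ) * q ^ ℓ = 1 - d * q := by
      rw [heq, div_mul_cancel₀ _ hqlne]
    have hxl : (b * ξ ^ 2 * q) ^ ℓ = 1 - d * q := by
      rw [mul_pow, mul_pow, hbl, ← pow_mul ξ 2 ℓ]; exact heq2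
    set x : ℝ := b * ξ ^ 2 * q with hx
    have hx0 : 0 < x := by positivity
    have hx1 : x ≤ 1 := by
      by_contra h
      push_neg at h
      have : (1 : ℝ) < x ^ ℓ := one_lt_pow₀ h (by omega)
      nlinarith [mul_pos hdpos hq0]
    have hxle : x ^ ℓ ≤ x := pow_le_of_le_one hx0.le hx1 (by omega)
    have hge : 1 - d * q ≤ x := by rw [← hxl]; exact hxle
    -- upper bound on q
    have hbne : b ≠ 0 := ne_of_gt hbpos
    have hξne : ξ ≠ 0 := ne_of_gt hξ0
    have hξ2 : (0 : ℝ) < ξ ^ 2 := by positivity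
    have hub : q ≤ b⁻¹ / ξ ^ 2 := by
      rw [le_div_iff₀ hξ2]
      have h2 : (0 : ℝ) ≤ b⁻¹ * (1 - b * ξ ^ 2 * q) :=
        mul_nonneg (by positivity) (sub_nonneg.mpr hx1)
      have hbinv : b⁻¹ * b = 1 := inv_mul_cancel₀ hbne
      nlinarith
    rw [abs_le]
    constructor
    · -- lower: -(C/ξ⁴) ≤ q - b⁻¹/ξ²  i.e. q ≥ b⁻¹/ξ² - C/ξ⁴
      have h1 : 1 - d * (b⁻¹ / ξ ^ 2) ≤ b * ξ ^ 2 * q := by nlinarith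
      have h2 : b⁻¹ / ξ ^ 2 * (1 - d * (b⁻¹ / ξ ^ 2)) ≤ b⁻¹ / ξ ^ 2 * (b * ξ ^ 2 * q) :=
        mul_le_mul_of_nonneg_left h1 (by positivity)
      have h3 : b⁻¹ / ξ ^ 2 * (b * ξ ^ 2 * q) = q := by field_simp
      have h4 : b⁻¹ / ξ ^ 2 * (1 - d * (b⁻¹ / ξ ^ 2)) =
          b⁻¹ / ξ ^ 2 - d * b⁻¹ ^ 2 / ξ ^ 4 := by field_simp
      rw [hC]
      linarith [h2, h3.symm ▸ h2]
    · have h5 : q - b⁻¹ / ξ ^ 2 ≤ 0 := sub_nonpos.mpr hub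
      have h6 : (0 : ℝ) ≤ C / ξ ^ 4 := by positivity
      linarith
  rw [ha]
  constructor
  · exact ⟨C, hCpos, 1, one_pos, key⟩
  · rw [← tendsto_sub_nhds_zero_iff]
    apply squeeze_zero_norm' (a := fun ξ : ℝ => C / ξ ^ 2)
    · filter_upwards [eventually_ge_atTop (1 : ℝ)] with ξ hξ
      have hξ0 : (0 : ℝ) < ξ := lt_of_lt_of_le one_pos hξ
      have h := key ξ hξ
      have hrw : ξ ^ 2 * Q ξ - b⁻¹ = ξ ^ 2 * (Q ξ - b⁻¹ / ξ ^ 2) := by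
        field_simp
      rw [Real.norm_eq_abs, hrw, abs_mul, abs_of_pos (by positivity : (0:ℝ) < ξ ^ 2)]
      calc ξ ^ 2 * |Q ξ - b⁻¹ / ξ ^ 2| ≤ ξ ^ 2 * (C / ξ ^ 4) := by
            exact mul_le_mul_of_nonneg_left h (by positivity)
        _ = C / ξ ^ 2 := by field_simp
    · exact Tendsto.div_atTop tendsto_const_nhds (tendsto_pow_atTop (by norm_num))
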